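/- There is an adaptive deterministic exact learning algorithm for any finite class C of Boolean functions that asks at most (ETD(C)/log₂ ETD(C))·log₂|C| + ETD(C) membership queries. -/

import Mathlib

variable {X : Type*} [Fintype X] [DecidableEq X]

/-- `T` is a specifying set for `h` with respect to `C`. -/
def IsSpecSet (C : Finset (X → Bool)) (h : X → Bool) (T : Finset X) : Prop :=
  (C.filter (fun f => ∀ x ∈ T, f x = h x)).card ≤ 1

/-- The minimum size of a specifying set for `h` with respect to `C`. -/
noncomputable def specNum (C : Finset (X → Bool)) (h : X → Bool) : ℕ :=
  sInf {k | ∃ T : Finset X, T.card = k ∧ IsSpecSet C h T}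

/-- The extended teaching dimension of `C`. -/
noncomputable def ETD (C : Finset (X → Bool)) : ℕ :=
  sSup {k | ∃ h : X → Bool, specNum C h = k}

/-- The transcript of answers of an adaptive deterministic algorithm. -/
def transcript {Y : Type*} (query : List Bool → Y) (f : Y → Bool) : ℕ → List Bool
  | 0 => []
  | k + 1 => transcript query f k ++ [f (query (transcript query f k))]

set_option linter.unusedSectionVars false
set_option maxHeartbeats 1000000

namespace Stmt9

/-! ### Decision trees and their execution -/

inductive Tr (X : Type*) where
  | leaf (g : X → Bool)
  | node (x : X) (t0 t1 : Tr X)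

section Trees

variable {X : Type*} [Fintype X] [DecidableEq X]

def depth : Tr X → ℕ
  | .leaf _ => 0
  | .node _ t0 t1 => max (depth t0) (depth t1) + 1

def walkOne : Tr X → Bool → Tr X
  | .leaf g, _ => .leaf g
  | .node _ t0 t1, b => cond b t1 t0

noncomputable def qf [Nonempty X] : Tr X → X
  | .leaf _ => Classical.arbitrary X
  | .node x _ _ => x

def outf : Tr X → (X → Bool)
  | .leaf g => g
  | .node _ _ _ => fun _ => false

noncomputable def stepf [Nonempty X] (f : X → Bool) (t : Tr X) : Tr X :=
  walkOne t (f (qf t))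

/-- `t` correctly identifies every `f ∈ V`. -/
def Good [Nonempty X] (t : Tr X) (V : Finset (X → Bool)) : Prop :=
  ∀ f ∈ V, ∀ m, depth t ≤ m → (stepf f)^[m] t = .leaf f

variable [Nonempty X]

lemma stepf_leaf (f g : X → Bool) : stepf f (Tr.leaf g) = Tr.leaf g := rfl

lemma iterate_stepf_leaf (f g : X → Bool) (m : ℕ) :
    (stepf f)^[m] (Tr.leaf g) = Tr.leaf g := by
  induction m with
  | zero => rfl
  | succ m ih => rw [Function.iterate_succ_apply, stepf_leaf, ih]

lemma good_leaf {V : Finset (X → Bool)} {g : X → Bool} (hg : ∀ f ∈ V, f = g) :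
    Good (Tr.leaf g) V := by
  intro f hf m _
  rw [iterate_stepf_leaf, hg f hf]

lemma good_empty (t : Tr X) : Good t (∅ : Finset (X → Bool)) := by
  intro f hf; simp at hf

lemma good_node {V : Finset (X → Bool)} {x : X} {t0 t1 : Tr X}
    (h0 : Good t0 (V.filter (fun f => f x = false)))
    (h1 : Good t1 (V.filter (fun f => f x = true)))
    : Good (Tr.node x t0 t1) V := by
  intro f hf m hm
  have hd : depth (Tr.node x t0 t1) = max (depth t0) (depth t1) + 1 := rfl
  obtain ⟨m', rfl⟩ : ∃ m', m = m' + 1 := by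
    cases m with
    | zero => rw [hd] at hm; omega
    | succ m' => exact ⟨m', rfl⟩
  rw [Function.iterate_succ_apply]
  have hstep : stepf f (Tr.node x t0 t1) = cond (f x) t1 t0 := rfl
  rw [hstep]
  rw [hd] at hm
  cases hfx : f x with
  | false =>
    exact h0 f (Finset.mem_filter.2 ⟨hf, hfx⟩) m' (by omega)
  | true =>
    exact h1 f (Finset.mem_filter.2 ⟨hf, hfx⟩) m' (by omega)

noncomputable def walk (t : Tr X) (l : List Bool) : Tr X := l.foldl walkOne t

lemma walk_transcript (t : Tr X) (f : X → Bool) (m : ℕ) :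
    walk t (transcript (fun l => qf (walk t l)) f m) = (stepf f)^[m] t := by
  induction m with
  | zero => rfl
  | succ m ih =>
    show walk t (_ ++ [_]) = _
    rw [walk, List.foldl_append]
    show walkOne (walk t (transcript _ f m)) (f (qf (walk t (transcript _ f m)))) = _
    rw [ih, Function.iterate_succ_apply']
    rfl

/-- Glue: from a good tree to the query/out format. -/
lemma tree_to_algorithm (t : Tr X) (C : Finset (X → Bool)) (hg : Good t C)
    (q : ℕ) (hq : depth t ≤ q) :
    ∃ (query : List Bool → X) (out : List Bool → (X → Bool)),
      ∀ f ∈ C, out (transcript query f q) = f := by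
  refine ⟨fun l => qf (walk t l), fun l => outf (walk t l), fun f hf => ?_⟩
  show outf (walk t (transcript (fun l => qf (walk t l)) f q)) = f
  rw [walk_transcript t f q, hg f hf q hq]
  rfl

end Trees

/-! ### Numeric facts -/

noncomputable def xk (d : ℕ) : ℝ := Real.log d / d

noncomputable def thk (d : ℕ) : ℝ := 1 - Real.exp (-(xk d))

lemma log_le_div_e {y : ℝ} (hy : 0 < y) : Real.log y ≤ y / Real.exp 1 := by
  have he : (0:ℝ) < Real.exp 1 := Real.exp_pos 1
  have h1 : Real.log (y / Real.exp 1) ≤ y / Real.exp 1 - 1 :=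
    Real.log_le_sub_one_of_pos (by positivity)
  rw [Real.log_div (ne_of_gt hy) (ne_of_gt he), Real.log_exp] at h1
  linarith

lemma mul_exp_neg_antitone {u v : ℝ} (hu : 1 ≤ u) (huv : u ≤ v) :
    v * Real.exp (-v) ≤ u * Real.exp (-u) := by
  have hu0 : (0:ℝ) < u := by linarith
  have hv0 : (0:ℝ) < v := by linarith
  have h1 : Real.log (v / u) ≤ v / u - 1 := Real.log_le_sub_one_of_pos (by positivity)
  have h2 : v / u - 1 ≤ v - u := by
    rw [div_sub_one (ne_of_gt hu0)]
    rw [div_le_iff₀ hu0]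
    nlinarith
  have h3 : Real.log v - Real.log u ≤ v - u := by
    rw [← Real.log_div (ne_of_gt hv0) (ne_of_gt hu0)]; linarith
  calc v * Real.exp (-v) = Real.exp (Real.log v + (-v)) := by
        rw [Real.exp_add, Real.exp_log hv0]
    _ ≤ Real.exp (Real.log u + (-u)) := Real.exp_le_exp.2 (by linarith)
    _ = u * Real.exp (-u) := by rw [Real.exp_add, Real.exp_log hu0]

lemma key_numeric (d : ℕ) (hd : 2 ≤ d) (j : ℕ) (hj1 : 1 ≤ j) (hjd : j ≤ d) :
    min (thk d) (1 / (j:ℝ)) ≤ Real.exp (-((j:ℝ) * xk d)) := by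
  unfold thk xk
  set x : ℝ := Real.log d / d with hxdef
  have hd0 : (0:ℝ) < d := by positivity
  have hd1 : (1:ℝ) < d := by exact_mod_cast hd
  have hlogd : 0 < Real.log d := Real.log_pos hd1
  have hx0 : 0 < x := by positivity
  by_cases hc : 1 - Real.exp (-x) ≤ Real.exp (-((j:ℝ) * x))
  · exact le_trans (min_le_left _ _) hc
  · push_neg at hc
    have hxx : 1 - Real.exp (-x) ≤ x := by nlinarith [Real.add_one_le_exp (-x)]
    have h1 : Real.exp (-((j:ℝ) * x)) < x := lt_of_lt_of_le hc hxx
    have hxe : x ≤ Real.exp (-1) := by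
      rw [Real.exp_neg]
      rw [hxdef, div_le_iff₀ hd0]
      calc Real.log d ≤ d / Real.exp 1 := log_le_div_e hd0
        _ = (Real.exp 1)⁻¹ * d := by ring
    have hjx1 : 1 ≤ (j:ℝ) * x := by
      have h2 : Real.exp (-((j:ℝ) * x)) < Real.exp (-1) := lt_of_lt_of_le h1 hxe
      have := Real.exp_lt_exp.mp h2
      linarith
    have hjxd : (j:ℝ) * x ≤ Real.log d := by
      have hj : (j:ℝ) ≤ d := by exact_mod_cast hjd
      calc (j:ℝ) * x ≤ (d:ℝ) * x := by nlinarith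
        _ = Real.log d := by rw [hxdef]; field_simp
    have h2 : Real.log d * Real.exp (-(Real.log d)) ≤ ((j:ℝ)*x) * Real.exp (-((j:ℝ)*x)) :=
      mul_exp_neg_antitone hjx1 hjxd
    have h3 : Real.log d * Real.exp (-Real.log d) = x := by
      rw [Real.exp_neg, Real.exp_log hd0, hxdef]; ring
    have hj0 : (0:ℝ) < j := by exact_mod_cast hj1
    have h4 : (1:ℝ)/j ≤ Real.exp (-((j:ℝ) * x)) := by
      rw [div_le_iff₀ hj0]
      nlinarith [Real.exp_pos (-((j:ℝ)*x))]
    exact le_trans (min_le_right _ _) h4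

lemma bnd_step (d : ℕ) (hd : 2 ≤ d) (m n : ℕ) (j : ℕ) (hm : 1 ≤ m)
    (h : (m:ℝ) ≤ Real.exp (-((j:ℝ) * xk d)) * n) :
    (j:ℝ) + ((d:ℝ) * Real.log m / Real.log d + d)
      ≤ (d:ℝ) * Real.log n / Real.log d + d := by
  unfold xk at h
  set x : ℝ := Real.log d / d with hxdef
  have hd0 : (0:ℝ) < d := by positivity
  have hld : 0 < Real.log d := Real.log_pos (by exact_mod_cast hd)
  have hm0 : (0:ℝ) < m := by exact_mod_cast hm
  have hn0 : (0:ℝ) < n := by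
    by_contra hn
    push_neg at hn
    nlinarith [Real.exp_pos (-((j:ℝ) * x))]
  have hlm : Real.log m ≤ Real.log n - (j:ℝ)*x := by
    have h5 := Real.log_le_log hm0 h
    rw [Real.log_mul (Real.exp_ne_zero _) (ne_of_gt hn0), Real.log_exp] at h5
    linarith
  have key2 : (j:ℝ) * Real.log d ≤ (d:ℝ) * (Real.log n - Real.log m) := by
    have h6 : (d:ℝ) * ((j:ℝ)*x) = (j:ℝ) * Real.log d := by rw [hxdef]; field_simp
    nlinarith
  have h7 : (j:ℝ) ≤ (d:ℝ) * Real.log n / Real.log d - (d:ℝ) * Real.log m / Real.log d := by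
    have h8 : (d:ℝ) * Real.log n / Real.log d - (d:ℝ) * Real.log m / Real.log d
        = (d:ℝ) * (Real.log n - Real.log m) / Real.log d := by ring
    rw [h8, le_div_iff₀ hld]
    linarith
  linarith

/-! ### Counting and majority -/

section Counting

variable {X : Type*} [Fintype X] [DecidableEq X]

/-- number of functions in `V` disagreeing with `h` at `p`. -/
def dis (V : Finset (X → Bool)) (h : X → Bool) (p : X) : ℕ :=
  (V.filter (fun f => f p ≠ h p)).card

def agr (V : Finset (X → Bool)) (h : X → Bool) (p : X) : ℕ :=
  (V.filter (fun f => f p = h p)).card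

lemma agr_add_dis (V : Finset (X → Bool)) (h : X → Bool) (p : X) :
    agr V h p + dis V h p = V.card := by
  classical
  exact Finset.card_filter_add_card_filter_not (s := V) (p := fun f => f p = h p)

lemma dis_mono {W V : Finset (X → Bool)} (h : X → Bool) (p : X) (hWV : W ⊆ V) :
    dis W h p ≤ dis V h p :=
  Finset.card_le_card (Finset.filter_subset_filter _ hWV)

/-- the pointwise majority function of `V`. -/
def maj (V : Finset (X → Bool)) : X → Bool := fun p =>
  decide ((V.filter (fun f => f p = false)).card ≤ (V.filter (fun f => f p = true)).card)

lemma dis_maj_le_agr (V : Finset (X → Bool)) (p : X) :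
    dis V (maj V) p ≤ agr V (maj V) p := by
  by_cases hc : (V.filter (fun f => f p = false)).card ≤ (V.filter (fun f => f p = true)).card
  · have hm : maj V p = true := by simp [maj, hc]
    unfold dis agr
    simp only [hm]
    have h1 : V.filter (fun f => f p ≠ true) = V.filter (fun f => f p = false) := by
      ext f; simp
    rw [h1]
    exact hc
  · have hm : maj V p = false := by simp [maj, hc]
    unfold dis agr
    simp only [hm]
    have h1 : V.filter (fun f => f p ≠ false) = V.filter (fun f => f p = true) := by
      ext f; simp
    rw [h1]
    exact le_of_not_ge hc

lemma dis_maj_le_side (V : Finset (X → Bool)) (p : X) (b : Bool) :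
    dis V (maj V) p ≤ (V.filter (fun f => f p = b)).card := by
  have hda := dis_maj_le_agr V p
  cases hhp : maj V p with
  | true =>
    cases b with
    | false =>
      apply le_of_eq
      unfold dis
      congr 1
      ext f; simp [hhp]
    | true =>
      refine le_trans hda (le_of_eq ?_)
      unfold agr
      congr 1
      ext f; simp [hhp]
  | false =>
    cases b with
    | true =>
      apply le_of_eq
      unfold dis
      congr 1
      ext f; simp [hhp]
    | false =>
      refine le_trans hda (le_of_eq ?_)
      unfold agr
      congr 1
      ext f; simp [hhp]

lemma filter_split_bool (V : Finset (X → Bool)) (p : X) :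
    (V.filter (fun f => f p = false)).card + (V.filter (fun f => f p = true)).card
      = V.card := by
  have h := Finset.card_filter_add_card_filter_not
    (s := V) (p := fun f => f p = false)
  have h2 : V.filter (fun f => ¬ f p = false) = V.filter (fun f => f p = true) := by
    ext f; simp
  rw [h2] at h
  exact h

/-! ### ETD facts -/

lemma isSpecSet_univ (C : Finset (X → Bool)) (h : X → Bool) :
    IsSpecSet C h Finset.univ := by
  apply Finset.card_le_one.2
  intro f hf g hg
  rw [Finset.mem_filter] at hf hg
  funext x
  rw [hf.2 x (Finset.mem_univ x), hg.2 x (Finset.mem_univ x)]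

lemma specNum_le_ETD (C : Finset (X → Bool)) (h : X → Bool) :
    specNum C h ≤ ETD C := by
  apply le_csSup
  · refine ⟨Fintype.card X, ?_⟩
    rintro k ⟨h', rfl⟩
    exact Nat.sInf_le ⟨Finset.univ, by simp, isSpecSet_univ C h'⟩
  · exact ⟨h, rfl⟩

lemma exists_specSet (C : Finset (X → Bool)) (h : X → Bool) :
    ∃ T : Finset X, T.card ≤ ETD C ∧ IsSpecSet C h T := by
  have hne : {k | ∃ T : Finset X, T.card = k ∧ IsSpecSet C h T}.Nonempty :=
    ⟨Finset.univ.card, Finset.univ, rfl, isSpecSet_univ C h⟩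
  obtain ⟨T, hT1, hT2⟩ := Nat.sInf_mem hne
  exact ⟨T, by rw [hT1]; exact specNum_le_ETD C h, hT2⟩

lemma card_le_two_of_ETD_le_one (C : Finset (X → Bool)) (hC : ETD C ≤ 1) :
    C.card ≤ 2 := by
  obtain ⟨T, hTc, hTs⟩ := exists_specSet C (maj C)
  have hTc1 : T.card ≤ 1 := le_trans hTc hC
  interval_cases h : T.card
  · rw [Finset.card_eq_zero] at h
    subst h
    unfold IsSpecSet at hTs
    simp only [Finset.notMem_empty, false_implies, implies_true, Finset.filter_true_of_mem] at hTs
    omega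
  · rw [Finset.card_eq_one] at h
    obtain ⟨p, rfl⟩ := h
    unfold IsSpecSet at hTs
    have hagr : agr C (maj C) p ≤ 1 := by
      unfold agr
      refine le_trans (le_of_eq ?_) hTs
      congr 1
      ext f
      simp
    have h1 := dis_maj_le_agr C p
    have h2 := agr_add_dis C (maj C) p
    clear hTs hTc hC
    omega

lemma card_le_one_of_ETD_eq_zero (C : Finset (X → Bool)) (hC : ETD C = 0) :
    C.card ≤ 1 := by
  obtain ⟨T, hTc, hTs⟩ := exists_specSet C (maj C)
  have : T = ∅ := by
    rw [← Finset.card_eq_zero]; omega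
  subst this
  unfold IsSpecSet at hTs
  simp only [Finset.notMem_empty, false_implies, implies_true, Finset.filter_true_of_mem] at hTs
  exact hTs

lemma bnd_eq (d n : ℕ) (hd : 2 ≤ d) :
    (d:ℝ) * Real.log n / Real.log d = ((d:ℝ) / Real.logb 2 d) * Real.logb 2 n := by
  have hld : Real.log d ≠ 0 := ne_of_gt (Real.log_pos (by exact_mod_cast hd))
  have h2 : Real.log 2 ≠ 0 := ne_of_gt (Real.log_pos (by norm_num))
  unfold Real.logb
  field_simp

end Counting

/-! ### The main construction -/

section MainSec

variable {X : Type*} [Fintype X] [DecidableEq X] [Nonempty X]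

lemma nat_aux1 (i a d : ℕ) (h : i + a ≤ d) (h1 : 1 ≤ a) : (i+1) + (a-1) ≤ d := by omega

lemma main (C : Finset (X → Bool)) (hd : 2 ≤ ETD C) :
    ∀ n : ℕ, ∀ V : Finset (X → Bool), V.card = n → V ⊆ C →
    ∃ t : Tr X, Good t V ∧
      (depth t : ℝ) ≤ (ETD C : ℝ) * Real.log n / Real.log (ETD C) + (ETD C : ℝ) := by
  intro n
  induction n using Nat.strong_induction_on with
  | _ n IH =>
  intro V hVcard hVC
  have hdr : (2:ℝ) ≤ (ETD C : ℝ) := by exact_mod_cast hd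
  have hd0 : (0:ℝ) < (ETD C : ℝ) := by linarith
  have hld : 0 < Real.log (ETD C) := Real.log_pos (by exact_mod_cast hd)
  have hxv0 : 0 < xk (ETD C) := by unfold xk; positivity
  have hθ0 : 0 < thk (ETD C) := by
    unfold thk
    have : Real.exp (-(xk (ETD C))) < 1 := by
      rw [Real.exp_lt_one_iff]; linarith
    linarith
  have hθ1 : thk (ETD C) < 1 := by
    unfold thk
    have := Real.exp_pos (-(xk (ETD C)))
    linarith
  have hαθ : Real.exp (-(xk (ETD C))) = 1 - thk (ETD C) := by unfold thk; ring
  by_cases hn1 : n ≤ 1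
  · -- base cases
    interval_cases n
    · refine ⟨Tr.leaf (fun _ => false), ?_, ?_⟩
      · rw [Finset.card_eq_zero] at hVcard
        subst hVcard
        exact good_empty _
      · show ((0:ℕ):ℝ) ≤ _
        simp only [Nat.cast_zero, CharP.cast_eq_zero, Real.log_zero, mul_zero, zero_div,
          zero_add]
        linarith
    · rw [Finset.card_eq_one] at hVcard
      obtain ⟨g, rfl⟩ := hVcard
      refine ⟨Tr.leaf g, good_leaf (by simp), ?_⟩
      show ((0:ℕ):ℝ) ≤ _
      simp only [Nat.cast_zero, Nat.cast_one, Real.log_one, mul_zero, zero_div, zero_add]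
      linarith
  · push_neg at hn1
    have hn2 : 2 ≤ n := hn1
    have hnr : (2:ℝ) ≤ (n:ℝ) := by exact_mod_cast hn2
    have hn0 : (0:ℝ) < n := by linarith
    have hlogn : 0 ≤ Real.log n := Real.log_nonneg (by linarith)
    have hdBn : (ETD C : ℝ) ≤ (ETD C : ℝ) * Real.log n / Real.log (ETD C) + (ETD C : ℝ) := by
      have : 0 ≤ (ETD C : ℝ) * Real.log n / Real.log (ETD C) := by positivity
      linarith
    by_cases hA : ∃ p : X, thk (ETD C) * n ≤ (dis V (maj V) p : ℝ)
    · -- Case A : a balanced query exists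
      obtain ⟨p, hp⟩ := hA
      have hside : ∀ b : Bool, thk (ETD C) * n ≤ ((V.filter (fun f => f p = b)).card : ℝ) := by
        intro b
        refine le_trans hp ?_
        exact_mod_cast dis_maj_le_side V p b
      have hsplit : (V.filter (fun f => f p = false)).card
          + (V.filter (fun f => f p = true)).card = n := by
        rw [← hVcard]; exact filter_split_bool V p
      have hpos : ∀ b : Bool, 1 ≤ (V.filter (fun f => f p = b)).card := by
        intro b
        by_contra hc
        push_neg at hc
        have h0 : (V.filter (fun f => f p = b)).card = 0 := Nat.lt_one_iff.mp hc
        have := hside b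
        rw [h0] at this
        have h1 : 0 < thk (ETD C) * n := by positivity
        simp only [Nat.cast_zero] at this
        linarith
      have hsize : ∀ b : Bool, ((V.filter (fun f => f p = b)).card : ℝ)
          ≤ Real.exp (-((1:ℕ) * xk (ETD C))) * n := by
        intro b
        have h1 := hside (!b)
        have h2 : ((V.filter (fun f => f p = b)).card : ℝ)
            + ((V.filter (fun f => f p = !b)).card : ℝ) = n := by
          cases b
          · exact_mod_cast hsplit
          · rw [add_comm]; exact_mod_cast hsplit
        have h3 : ((V.filter (fun f => f p = b)).card : ℝ) ≤ (1 - thk (ETD C)) * n := by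
          nlinarith
        rw [Nat.cast_one, one_mul, hαθ]
        exact h3
      have hlt : ∀ b : Bool, (V.filter (fun f => f p = b)).card < n := by
        intro b
        have ho := hpos !b
        cases b
        · calc (V.filter (fun f => f p = false)).card
              < (V.filter (fun f => f p = false)).card
                + (V.filter (fun f => f p = true)).card :=
                Nat.lt_add_of_pos_right (by simpa using ho)
            _ = n := hsplit
        · calc (V.filter (fun f => f p = true)).card
              < (V.filter (fun f => f p = false)).card
                + (V.filter (fun f => f p = true)).card :=
                Nat.lt_add_of_pos_left (by simpa using ho)
            _ = n := hsplit
      obtain ⟨t0, hg0, hb0⟩ := IH _ (hlt false) (V.filter (fun f => f p = false)) rfl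
        (le_trans (Finset.filter_subset _ V) hVC)
      obtain ⟨t1, hg1, hb1⟩ := IH _ (hlt true) (V.filter (fun f => f p = true)) rfl
        (le_trans (Finset.filter_subset _ V) hVC)
      have hstep0 := bnd_step (ETD C) hd _ n 1 (hpos false) (hsize false)
      have hstep1 := bnd_step (ETD C) hd _ n 1 (hpos true) (hsize true)
      refine ⟨Tr.node p t0 t1, good_node hg0 hg1, ?_⟩
      show ((max (depth t0) (depth t1) + 1 : ℕ) : ℝ) ≤ _
      push_cast
      rcases le_total ((depth t0 : ℝ)) ((depth t1 : ℝ)) with hmx | hmx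
      · rw [max_eq_right hmx]
        push_cast at hstep1
        linarith
      · rw [max_eq_left hmx]
        push_cast at hstep0
        linarith
    · -- Case B : no balanced query; use a specifying set for the majority
      push_neg at hA
      obtain ⟨T, hTd, hTs⟩ := exists_specSet C (maj V)
      have inner : ∀ r : ℕ, ∀ R : Finset X, R.card = r → ∀ i : ℕ,
          ∀ W : Finset (X → Bool),
          W ⊆ V → i + R.card ≤ ETD C →
          (∀ q ∈ R, i * dis W (maj V) q + W.card ≤ n) →
          (W.filter (fun f => ∀ q ∈ R, f q = maj V q)).card ≤ 1 →
          ∃ t : Tr X, Good t W ∧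
            (depth t : ℝ) + (i:ℝ)
              ≤ (ETD C : ℝ) * Real.log n / Real.log (ETD C) + (ETD C : ℝ) := by
        intro r
        induction r using Nat.strong_induction_on with
        | _ r IHr =>
        intro R hRr i W hWV hiR hK hspec
        have hiRd : (i : ℝ) ≤ (ETD C : ℝ) := by
          have : i ≤ ETD C := le_trans (Nat.le_add_right i R.card) hiR
          exact_mod_cast this
        rcases Finset.eq_empty_or_nonempty R with rfl | hRne
        · -- no more points : at most one candidate remains
          have hW1 : W.card ≤ 1 := by
            have he : W.filter (fun f => ∀ q ∈ (∅ : Finset X), f q = maj V q) = W := by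
              apply Finset.filter_true_of_mem
              intro f _
              simp
            rw [he] at hspec
            exact hspec
          rcases Nat.le_one_iff_eq_zero_or_eq_one.mp hW1 with h0 | h1
          · rw [Finset.card_eq_zero] at h0
            subst h0
            exact ⟨Tr.leaf (fun _ => false), good_empty _, by
              show ((0:ℕ):ℝ) + _ ≤ _
              push_cast
              linarith⟩
          · rw [Finset.card_eq_one] at h1
            obtain ⟨g, rfl⟩ := h1
            exact ⟨Tr.leaf g, good_leaf (by simp), by
              show ((0:ℕ):ℝ) + _ ≤ _
              push_cast
              linarith⟩
        · -- pick the next point greedily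
          obtain ⟨p, hpR, hpmax⟩ := Finset.exists_max_image R (fun q => dis W (maj V) q) hRne
          have hr1 : 1 ≤ R.card := Finset.card_pos.2 hRne
          have hjd : i + 1 ≤ ETD C := le_trans (Nat.add_le_add_left hr1 i) hiR
          set W' := W.filter (fun f => f p = maj V p) with hW'def
          set D := W.filter (fun f => f p ≠ maj V p) with hDdef
          have hDdis : D.card = dis W (maj V) p := rfl
          have hsplitW : W'.card + D.card = W.card := agr_add_dis W (maj V) p
          have hDVr : (D.card : ℝ) < thk (ETD C) * n := by
            have h1 : dis W (maj V) p ≤ dis V (maj V) p := dis_mono (maj V) p hWV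
            have h2 := hA p
            have h3 : (dis W (maj V) p : ℝ) ≤ (dis V (maj V) p : ℝ) := by exact_mod_cast h1
            rw [hDdis]
            linarith
          have hDj : (i+1) * D.card ≤ n := by
            have hKp := hK p hpR
            have hDW : D.card ≤ W.card := Finset.card_le_card (Finset.filter_subset _ W)
            have h4 : (i+1) * D.card = i * D.card + D.card := by ring
            rw [h4, hDdis]
            calc i * dis W (maj V) p + D.card ≤ i * dis W (maj V) p + W.card :=
                Nat.add_le_add_left hDW _
              _ ≤ n := by rw [← hDdis] at hKp; exact hKp
          have hkey : (D.card : ℝ) ≤ Real.exp (-(((i+1 : ℕ)):ℝ) * xk (ETD C)) * n := by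
            have hkn := key_numeric (ETD C) hd (i+1) (Nat.le_add_left 1 i) hjd
            have hi0 : (0:ℝ) < ((i+1:ℕ):ℝ) := by positivity
            have hmin : (D.card : ℝ) ≤ min (thk (ETD C)) (1/((i+1:ℕ):ℝ)) * (n:ℝ) := by
              rcases le_total (thk (ETD C)) (1/((i+1:ℕ):ℝ)) with hmm | hmm
              · rw [min_eq_left hmm]
                linarith
              · rw [min_eq_right hmm]
                have h5 : ((i+1:ℕ):ℝ) * (D.card:ℝ) ≤ (n:ℝ) := by exact_mod_cast hDj
                rw [one_div, inv_mul_eq_div, le_div_iff₀ hi0]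
                linarith
            calc (D.card : ℝ) ≤ min (thk (ETD C)) (1/((i+1:ℕ):ℝ)) * (n:ℝ) := hmin
              _ ≤ Real.exp (-(((i+1:ℕ)):ℝ) * xk (ETD C)) * n := by
                  apply mul_le_mul_of_nonneg_right _ (le_of_lt hn0)
                  convert hkn using 2
                  · rfl
                  ring
          -- subtree for the disagreeing branch
          have hDtree : ∃ tD : Tr X, Good tD D ∧
              (depth tD : ℝ) + ((i+1:ℕ):ℝ)
                ≤ (ETD C : ℝ) * Real.log n / Real.log (ETD C) + (ETD C : ℝ) := by
            rcases Nat.eq_zero_or_pos D.card with hD0 | hD1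
            · rw [Finset.card_eq_zero] at hD0
              refine ⟨Tr.leaf (fun _ => false), by rw [hD0]; exact good_empty _, ?_⟩
              show ((0:ℕ):ℝ) + _ ≤ _
              have h6 : ((i+1:ℕ):ℝ) ≤ (ETD C:ℝ) := by exact_mod_cast hjd
              push_cast
              push_cast at h6
              linarith
            · have hDltn : D.card < n := by
                have h7 : (D.card:ℝ) < (n:ℝ) := by nlinarith
                exact_mod_cast h7
              obtain ⟨tD, hgD, hbD⟩ := IH D.card hDltn D rfl
                (le_trans (le_trans (Finset.filter_subset _ W) hWV) hVC)
              refine ⟨tD, hgD, ?_⟩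
              have h8 := bnd_step (ETD C) hd D.card n (i+1) hD1 (by
                convert hkey using 3
                push_cast
                ring)
              push_cast at h8 ⊢
              linarith
          obtain ⟨tD, hgD, hbD⟩ := hDtree
          -- the agreeing branch : recurse on the remaining points
          have hRe : (R.erase p).card < r := by
            rw [← hRr]
            exact Finset.card_erase_lt_of_mem hpR
          have hspec' : (W'.filter (fun f => ∀ q ∈ R.erase p, f q = maj V q)).card ≤ 1 := by
            have hEq : W'.filter (fun f => ∀ q ∈ R.erase p, f q = maj V q)
                = W.filter (fun f => ∀ q ∈ R, f q = maj V q) := by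
              rw [hW'def, Finset.filter_filter]
              ext f
              simp only [Finset.mem_filter]
              constructor
              · rintro ⟨hfW, hfp, hrest⟩
                refine ⟨hfW, fun q hq => ?_⟩
                by_cases hqp : q = p
                · subst hqp; exact hfp
                · exact hrest q (Finset.mem_erase.2 ⟨hqp, hq⟩)
              · rintro ⟨hfW, hall⟩
                exact ⟨hfW, hall p hpR, fun q hq => hall q (Finset.mem_of_mem_erase hq)⟩
            rw [hEq]
            exact hspec
          have hK' : ∀ q ∈ R.erase p, (i+1) * dis W' (maj V) q + W'.card ≤ n := by
            intro q hq
            have hqR := Finset.mem_of_mem_erase hq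
            have h1 : dis W' (maj V) q ≤ dis W (maj V) q :=
              dis_mono (maj V) q (Finset.filter_subset _ W)
            have h2 : dis W (maj V) q ≤ dis W (maj V) p := hpmax q hqR
            have hKq := hK q hqR
            calc (i+1) * dis W' (maj V) q + W'.card
                = i * dis W' (maj V) q + (dis W' (maj V) q + W'.card) := by ring
              _ ≤ i * dis W (maj V) q + (dis W (maj V) p + W'.card) :=
                  add_le_add (Nat.mul_le_mul_left i h1) (add_le_add_left (h1.trans h2) _)
              _ = i * dis W (maj V) q + W.card := by
                  rw [← hDdis, add_comm D.card W'.card, hsplitW]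
              _ ≤ n := hKq
          have hiR' : (i+1) + (R.erase p).card ≤ ETD C := by
            rw [Finset.card_erase_of_mem hpR]
            exact nat_aux1 i R.card (ETD C) hiR hr1
          obtain ⟨tA, hgA, hbA⟩ := IHr (R.erase p).card hRe (R.erase p) rfl (i+1) W'
            (le_trans (Finset.filter_subset _ W) hWV) hiR' hK' hspec'
          -- assemble the node
          have hfin : ∀ tx ty : Tr X,
              Good tx (W.filter (fun f => f p = false)) →
              Good ty (W.filter (fun f => f p = true)) →
              (depth tx : ℝ) + ((i+1:ℕ):ℝ)
                ≤ (ETD C : ℝ) * Real.log n / Real.log (ETD C) + (ETD C : ℝ) →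
              (depth ty : ℝ) + ((i+1:ℕ):ℝ)
                ≤ (ETD C : ℝ) * Real.log n / Real.log (ETD C) + (ETD C : ℝ) →
              ∃ t : Tr X, Good t W ∧
                (depth t : ℝ) + (i:ℝ)
                  ≤ (ETD C : ℝ) * Real.log n / Real.log (ETD C) + (ETD C : ℝ) := by
            intro tx ty hgx hgy hbx hby
            refine ⟨Tr.node p tx ty, good_node hgx hgy, ?_⟩
            show ((max (depth tx) (depth ty) + 1 : ℕ) : ℝ) + (i:ℝ) ≤ _
            push_cast
            push_cast at hbx hby
            rcases le_total ((depth tx : ℝ)) ((depth ty : ℝ)) with hmx | hmx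
            · rw [max_eq_right hmx]; linarith
            · rw [max_eq_left hmx]; linarith
          have hbA' : (depth tA : ℝ) + ((i+1:ℕ):ℝ)
              ≤ (ETD C : ℝ) * Real.log n / Real.log (ETD C) + (ETD C : ℝ) := by
            push_cast at hbA ⊢
            linarith
          cases hhp : maj V p with
          | true =>
            apply hfin tD tA
            · have he : W.filter (fun f => f p = false) = D := by
                rw [hDdef]; ext f; simp [hhp]
              rw [he]; exact hgD
            · have he : W.filter (fun f => f p = true) = W' := by
                rw [hW'def]; ext f; simp [hhp]
              rw [he]; exact hgA
            · exact hbD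
            · exact hbA'
          | false =>
            apply hfin tA tD
            · have he : W.filter (fun f => f p = false) = W' := by
                rw [hW'def]; ext f; simp [hhp]
              rw [he]; exact hgA
            · have he : W.filter (fun f => f p = true) = D := by
                rw [hDdef]; ext f; simp [hhp]
              rw [he]; exact hgD
            · exact hbA'
            · exact hbD
      have hspec0 : (V.filter (fun f => ∀ q ∈ T, f q = maj V q)).card ≤ 1 :=
        le_trans (Finset.card_le_card (Finset.filter_subset_filter _ hVC)) hTs
      obtain ⟨t, hg, hb⟩ := inner T.card T rfl 0 V (subset_refl V) (by simpa using hTd)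
        (fun q _ => by simp [hVcard]) hspec0
      refine ⟨t, hg, ?_⟩
      push_cast at hb
      linarith

end MainSec

end Stmt9

/-- There is an adaptive deterministic exact learning algorithm for any finite
class `C` of Boolean functions asking at most
`(ETD(C)/log₂ ETD(C))·log₂|C| + ETD(C)` membership queries. -/
theorem stmt9 [Nonempty X] (C : Finset (X → Bool)) :
    ∃ (q : ℕ) (query : List Bool → X) (out : List Bool → (X → Bool)),
      (q : ℝ) ≤ ((ETD C : ℝ) / Real.logb 2 (ETD C)) * Real.logb 2 (C.card)
          + (ETD C : ℝ) ∧
        ∀ f ∈ C, out (transcript query f q) = f := by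
  by_cases hd : 2 ≤ ETD C
  · obtain ⟨t, hg, hb⟩ := Stmt9.main C hd C.card C rfl (subset_refl C)
    obtain ⟨query, out, hout⟩ := Stmt9.tree_to_algorithm t C hg (Stmt9.depth t) le_rfl
    refine ⟨Stmt9.depth t, query, out, ?_, hout⟩
    calc ((Stmt9.depth t : ℕ) : ℝ)
        ≤ (ETD C : ℝ) * Real.log C.card / Real.log (ETD C) + (ETD C : ℝ) := hb
      _ = ((ETD C : ℝ) / Real.logb 2 (ETD C)) * Real.logb 2 (C.card) + (ETD C : ℝ) := by
          rw [Stmt9.bnd_eq (ETD C) C.card hd]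
  · push_neg at hd
    have hd1 : ETD C ≤ 1 := by omega
    have hC2 : C.card ≤ 2 := Stmt9.card_le_two_of_ETD_le_one C hd1
    by_cases h1 : C.card ≤ 1
    · -- at most one candidate : zero queries
      refine ⟨0, fun _ => Classical.arbitrary X,
        fun _ => if hC : C.Nonempty then hC.choose else (fun _ => false), ?_, ?_⟩
      · have hlb : Real.logb 2 ((C.card : ℕ) : ℝ) = 0 := by
          rcases Nat.le_one_iff_eq_zero_or_eq_one.mp h1 with h0 | h1'
          · rw [h0]; simp
          · rw [h1']; simp
        rw [hlb, mul_zero, zero_add]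
        exact_mod_cast Nat.zero_le _
      · intro f hf
        have hCne : C.Nonempty := ⟨f, hf⟩
        show (if hC : C.Nonempty then hC.choose else (fun _ => false)) = f
        rw [dif_pos hCne]
        exact Finset.card_le_one.mp h1 _ hCne.choose_spec _ hf
    · -- exactly two candidates : one query
      push_neg at h1
      have h2 : C.card = 2 := le_antisymm hC2 h1
      have hE1 : ETD C = 1 := by
        rcases Nat.le_one_iff_eq_zero_or_eq_one.mp hd1 with h0 | h1'
        · have := Stmt9.card_le_one_of_ETD_eq_zero C h0
          omega
        · exact h1'
      obtain ⟨a, b, hab, hC⟩ := Finset.card_eq_two.mp h2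
      obtain ⟨x₀, hx₀⟩ := Function.ne_iff.mp hab
      refine ⟨1, fun _ => x₀, fun l => if l = [a x₀] then a else b, ?_, ?_⟩
      · rw [hE1]
        simp only [Nat.cast_one, Real.logb_one, div_zero, zero_mul, zero_add, le_refl]
      · intro f hf
        have htr : transcript (fun _ => x₀) f 1 = [f x₀] := by
          show transcript _ f 0 ++ [f x₀] = [f x₀]
          rfl
        rw [htr]
        rw [hC, Finset.mem_insert, Finset.mem_singleton] at hf
        rcases hf with hfa | hfb
        · subst hfa
          show (if ([f x₀] : List Bool) = [f x₀] then f else b) = f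
          rw [if_pos rfl]
        · subst hfb
          have hne : ([f x₀] : List Bool) ≠ [a x₀] := by
            intro hcon
            injection hcon with hh1 hh2
            exact hx₀ hh1.symm
          show (if ([f x₀] : List Bool) = [a x₀] then a else f) = f
          rw [if_neg hne]
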